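/- In GL_n over any field F, with P the stabilizer of the line spanned by the row vector e_n, U_k = {I + ∑_{j>k} u_j E_{k,j}}, and w_{(kn)} the permutation matrix of the transposition (k n), one has the disjoint decomposition GL_n(F) = ⊔_{k=1}^n U_k w_{(kn)} P, and for each k the multiplication map U_k × P → U_k w_{(kn)} P is a bijection. -/

import Mathlib

open Matrix

/-- The permutation matrix `w_σ = ∑_j E_{σ(j), j}`. -/
def permMat {F : Type*} [Field F] {n : ℕ} [DecidableEq (Fin n)]
    (σ : Equiv.Perm (Fin n)) : Matrix (Fin n) (Fin n) F :=
  Matrix.of fun i j => if σ j = i then 1 else 0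

/-- The parabolic `P`: stabilizer of the line spanned by the last standard row vector,
i.e. invertible matrices whose last row is supported on the last coordinate. -/
def parabolicP (F : Type*) [Field F] (n : ℕ) : Set (GL (Fin (n + 1)) F) :=
  {g | ∀ j : Fin (n + 1), j ≠ Fin.last n →
    (g : Matrix (Fin (n + 1)) (Fin (n + 1)) F) (Fin.last n) j = 0}

/-- `U_k`: unipotent matrices `I + ∑_{j > k} u_j E_{k,j}`, i.e. with ones on the diagonal and
the only possible off-diagonal nonzero entries in row `k`, at columns `> k`. -/
def rowUnipotent (F : Type*) [Field F] {n : ℕ} (k : Fin (n + 1)) :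
    Set (GL (Fin (n + 1)) F) :=
  {u | (∀ i : Fin (n + 1), (u : Matrix (Fin (n + 1)) (Fin (n + 1)) F) i i = 1) ∧
    ∀ i j : Fin (n + 1), i ≠ j →
      (u : Matrix (Fin (n + 1)) (Fin (n + 1)) F) i j ≠ 0 → i = k ∧ k < j}

section Aux
variable {F : Type*} [Field F] {m : ℕ}

lemma permMat_mul_apply (σ : Equiv.Perm (Fin m)) (A : Matrix (Fin m) (Fin m) F) (i j : Fin m) :
    ((permMat σ : Matrix (Fin m) (Fin m) F) * A) i j = A (σ⁻¹ i) j := by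
  rw [Matrix.mul_apply, Finset.sum_eq_single (σ⁻¹ i)]
  · simp [permMat]
  · intro b _ hb
    have : σ b ≠ i := fun h => hb (by simp [← h])
    simp [permMat, this]
  · simp

lemma permMat_swap_sq (k l : Fin m) :
    (permMat (Equiv.swap k l) : Matrix (Fin m) (Fin m) F) * permMat (Equiv.swap k l) = 1 := by
  ext i j
  rw [permMat_mul_apply, Equiv.swap_inv]
  simp only [permMat, Matrix.of_apply, Matrix.one_apply]
  by_cases h : j = i <;> simp [h, eq_comm]

lemma nil_mul (k : Fin m) (N : Matrix (Fin m) (Fin m) F)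
    (hN : ∀ i j, N i j ≠ 0 → i = k ∧ k < j) : N * N = 0 := by
  ext i j
  rw [Matrix.mul_apply, Matrix.zero_apply]
  apply Finset.sum_eq_zero
  intro b _
  by_cases h : N i b = 0
  · rw [h, zero_mul]
  · obtain ⟨_, hkb⟩ := hN i b h
    have hb : N b j = 0 := by
      by_contra h2
      exact absurd ((hN b j h2).1 ▸ hkb) (lt_irrefl k)
    rw [hb, mul_zero]

lemma unip_mul (N : Matrix (Fin m) (Fin m) F) (h : N * N = 0) :
    (1 + N) * (1 - N) = 1 ∧ (1 - N) * (1 + N) = 1 := by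
  constructor <;> (noncomm_ring; rw [h]; simp)

end Aux

/-- Parabolic Bruhat decomposition: every `x ∈ GL_{n+1}(F)` has a unique expression
`x = u · w_{(k n)} · p` with `u ∈ U_k`, `p ∈ P`; in particular
`GL_{n+1}(F) = ⊔_k U_k w_{(kn)} P` disjointly, with each multiplication map a bijection. -/
theorem parabolic_bruhat_decomposition {F : Type*} [Field F] {n : ℕ}
    (x : GL (Fin (n + 1)) F) :
    ∃! t : Fin (n + 1) × GL (Fin (n + 1)) F × GL (Fin (n + 1)) F,
      t.2.1 ∈ rowUnipotent F t.1 ∧ t.2.2 ∈ parabolicP F n ∧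
        (x : Matrix (Fin (n + 1)) (Fin (n + 1)) F) =
          (t.2.1 : Matrix (Fin (n + 1)) (Fin (n + 1)) F) *
            permMat (Equiv.swap t.1 (Fin.last n)) *
            (t.2.2 : Matrix (Fin (n + 1)) (Fin (n + 1)) F) := by
  classical
  set r : Fin (n + 1) → F := fun j => x.inv (Fin.last n) j with hr_def
  -- the last row of x⁻¹ is nonzero
  have hr_ex : ∃ j, r j ≠ 0 := by
    by_contra h
    push_neg at h
    have h1 : (x.inv * x.val) (Fin.last n) (Fin.last n) = 1 := by
      rw [x.inv_val]; exact Matrix.one_apply_eq _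
    rw [Matrix.mul_apply] at h1
    simp only [show ∀ j, x.inv (Fin.last n) j = 0 from h] at h1
    simp at h1
  set S : Finset (Fin (n + 1)) := Finset.univ.filter (fun j => r j ≠ 0) with hS_def
  have hS : S.Nonempty := by
    obtain ⟨j, hj⟩ := hr_ex
    exact ⟨j, by simp [hS_def, hj]⟩
  set k : Fin (n + 1) := S.min' hS with hk_def
  have hk : r k ≠ 0 := by
    exact (Finset.mem_filter.mp (S.min'_mem hS)).2
  have hmin : ∀ j, j < k → r j = 0 := by
    intro j hj
    by_contra h
    exact absurd (S.min'_le j (by simp [hS_def, h])) (not_le.mpr hj)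
  -- the unipotent part
  set N : Matrix (Fin (n + 1)) (Fin (n + 1)) F :=
    Matrix.of (fun i j => if i = k ∧ k < j then -(r j * (r k)⁻¹) else 0) with hN_def
  have hNsupp : ∀ i j, N i j ≠ 0 → i = k ∧ k < j := by
    intro i j h
    by_contra hc
    exact h (by simp [hN_def, hc])
  have hN2 := nil_mul k N hNsupp
  obtain ⟨hu1, hu2⟩ := unip_mul N hN2
  set uGL : GL (Fin (n + 1)) F := ⟨1 + N, 1 - N, hu1, hu2⟩ with hu_def
  set W : Matrix (Fin (n + 1)) (Fin (n + 1)) F := permMat (Equiv.swap k (Fin.last n)) with hW_def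
  have hW : W * W = 1 := permMat_swap_sq k (Fin.last n)
  set wGL : GL (Fin (n + 1)) F := ⟨W, W, hW, hW⟩ with hw_def
  set pGL : GL (Fin (n + 1)) F := wGL⁻¹ * uGL⁻¹ * x with hp_def
  have hpval : pGL.val = W * (1 - N) * x.val := rfl
  -- the key row computation
  have hrow : ∀ a, (W * (1 - N)) (Fin.last n) a = r a * (r k)⁻¹ := by
    intro a
    rw [hW_def, permMat_mul_apply, Equiv.swap_inv, Equiv.swap_apply_right]
    rcases lt_trichotomy a k with h | h | h
    · simp [Matrix.sub_apply, Matrix.one_apply, hN_def, not_lt.mpr h.le, hmin a h, h.ne']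
    · subst h
      simp [Matrix.sub_apply, Matrix.one_apply, hN_def, mul_inv_cancel₀ hk]
    · simp [Matrix.sub_apply, Matrix.one_apply, hN_def, h, h.ne]
  have hplast : ∀ j, pGL.val (Fin.last n) j = (r k)⁻¹ * (if Fin.last n = j then 1 else 0) := by
    intro j
    rw [hpval, Matrix.mul_apply]
    simp_rw [hrow]
    have : ∀ a, r a * (r k)⁻¹ * x.val a j = (r k)⁻¹ * (x.inv (Fin.last n) a * x.val a j) := by
      intro a; rw [hr_def]; ring
    simp_rw [this, ← Finset.mul_sum, ← Matrix.mul_apply, x.inv_val, Matrix.one_apply]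
  have huMem : uGL ∈ rowUnipotent F k := by
    constructor
    · intro i
      have hNii : N i i = 0 := by
        simp only [hN_def, Matrix.of_apply, ite_eq_right_iff]
        rintro ⟨rfl, h⟩; exact absurd h (lt_irrefl _)
      show (1 + N) i i = 1
      rw [Matrix.add_apply, hNii, Matrix.one_apply_eq, add_zero]
    · intro i j hij h
      apply hNsupp i j
      have : (1 + N) i j = N i j := by
        rw [Matrix.add_apply, Matrix.one_apply_ne hij, zero_add]
      rwa [show (uGL.val : Matrix (Fin (n+1)) (Fin (n+1)) F) i j = (1 + N) i j from rfl, this] at h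
  have hpMem : pGL ∈ parabolicP F n := by
    intro j hj
    rw [show (pGL : Matrix (Fin (n+1)) (Fin (n+1)) F) (Fin.last n) j = pGL.val (Fin.last n) j from rfl,
      hplast j, if_neg (Ne.symm hj), mul_zero]
  have hx_eq : (x : Matrix (Fin (n + 1)) (Fin (n + 1)) F) =
      (uGL : Matrix (Fin (n+1)) (Fin (n+1)) F) * permMat (Equiv.swap k (Fin.last n)) *
        (pGL : Matrix (Fin (n+1)) (Fin (n+1)) F) := by
    show x.val = (1 + N) * W * (W * (1 - N) * x.val)
    calc x.val = ((1 + N) * (1 - N)) * x.val := by rw [hu1, one_mul]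
    _ = (1 + N) * ((W * W) * ((1 - N) * x.val)) := by rw [hW, one_mul, mul_assoc]
    _ = (1 + N) * W * (W * (1 - N) * x.val) := by simp only [mul_assoc]
  refine ⟨⟨k, uGL, pGL⟩, ⟨huMem, hpMem, hx_eq⟩, ?_⟩
  rintro ⟨k', u', p'⟩ ⟨hu', hp', hx'⟩
  set N' : Matrix (Fin (n + 1)) (Fin (n + 1)) F := u'.val - 1 with hN'_def
  have hN'supp : ∀ i j, N' i j ≠ 0 → i = k' ∧ k' < j := by
    intro i j h
    by_cases hij : i = j
    · exfalso
      apply h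
      subst hij
      rw [hN'_def, Matrix.sub_apply, hu'.1 i, Matrix.one_apply_eq, sub_self]
    · apply hu'.2 i j hij
      have hval : u'.val i j = N' i j := by
        rw [hN'_def, Matrix.sub_apply, Matrix.one_apply_ne hij, sub_zero]
      rw [show (u' : Matrix (Fin (n+1)) (Fin (n+1)) F) i j = u'.val i j from rfl, hval]
      exact h
  have hN'2 := nil_mul k' N' hN'supp
  obtain ⟨h'1, h'2⟩ := unip_mul N' hN'2
  have huval : (1 + N') = u'.val := by rw [hN'_def]; abel
  have hval1 : u'.val * (1 - N') = 1 := by rw [← huval]; exact h'1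
  have hinv' : u'.inv = 1 - N' := by
    calc u'.inv = u'.inv * (u'.val * (1 - N')) := by rw [hval1, mul_one]
    _ = (u'.inv * u'.val) * (1 - N') := by rw [mul_assoc]
    _ = 1 - N' := by rw [u'.inv_val, one_mul]
  set W' : Matrix (Fin (n + 1)) (Fin (n + 1)) F := permMat (Equiv.swap k' (Fin.last n)) with hW'_def
  have hWW' : W' * W' = 1 := permMat_swap_sq _ _
  set w'GL : GL (Fin (n + 1)) F := ⟨W', W', hWW', hWW'⟩ with hw'_def
  have hxu : x = u' * w'GL * p' := Units.ext hx'
  set d : F := p'.val (Fin.last n) (Fin.last n) with hd_def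
  have hp'row : ∀ j, p'.val (Fin.last n) j = if j = Fin.last n then d else 0 := by
    intro j
    by_cases h : j = Fin.last n
    · subst h; rw [if_pos rfl]
    · rw [if_neg h]; exact hp' j h
  have hd0 : d ≠ 0 := by
    intro hd
    have h1 : (p'.val * p'.inv) (Fin.last n) (Fin.last n) = 1 := by
      rw [p'.val_inv]; exact Matrix.one_apply_eq _
    rw [Matrix.mul_apply] at h1
    simp [hp'row, hd] at h1
  have hp'inv : ∀ j, p'.inv (Fin.last n) j = d⁻¹ * (if Fin.last n = j then 1 else 0) := by
    intro j
    have h1 : ∑ a, p'.val (Fin.last n) a * p'.inv a j = (1 : Matrix (Fin (n+1)) (Fin (n+1)) F) (Fin.last n) j := by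
      rw [← Matrix.mul_apply, p'.val_inv]
    simp_rw [hp'row, ite_mul, zero_mul] at h1
    rw [Finset.sum_ite_eq' Finset.univ (Fin.last n) (fun a => d * p'.inv a j),
      if_pos (Finset.mem_univ _)] at h1
    rw [Matrix.one_apply] at h1
    apply mul_left_cancel₀ hd0
    rw [← mul_assoc, mul_inv_cancel₀ hd0, one_mul]
    exact h1
  have hxinvval : x.inv = p'.inv * (W' * (1 - N')) := by
    have h2 : x⁻¹ = p'⁻¹ * (w'GL⁻¹ * u'⁻¹) := by
      rw [hxu, _root_.mul_inv_rev, _root_.mul_inv_rev]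
    calc x.inv = (x⁻¹).val := rfl
    _ = (p'⁻¹ * (w'GL⁻¹ * u'⁻¹)).val := by rw [h2]
    _ = p'.inv * (W' * u'.inv) := by rw [Units.val_mul, Units.val_mul]; rfl
    _ = p'.inv * (W' * (1 - N')) := by rw [hinv']
  have hrj : ∀ j, r j = d⁻¹ * ((1 - N') k' j) := by
    intro j
    show x.inv (Fin.last n) j = _
    rw [hxinvval, Matrix.mul_apply]
    simp_rw [hp'inv, mul_ite, mul_one, mul_zero, ite_mul, zero_mul]
    rw [Finset.sum_ite_eq Finset.univ (Fin.last n) (fun a => d⁻¹ * (W' * (1 - N')) a j),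
      if_pos (Finset.mem_univ _)]
    congr 1
    rw [hW'_def, permMat_mul_apply, Equiv.swap_inv, Equiv.swap_apply_right]
  have hN'kk : N' k' k' = 0 := by
    by_contra h; exact absurd (hN'supp _ _ h).2 (lt_irrefl _)
  have hrk' : r k' = d⁻¹ := by
    rw [hrj, Matrix.sub_apply, Matrix.one_apply_eq, hN'kk, sub_zero, mul_one]
  have hrlt : ∀ j, j < k' → r j = 0 := by
    intro j hj
    have hN'j : N' k' j = 0 := by
      by_contra h
      exact absurd (hN'supp _ _ h).2 (not_lt.mpr hj.le)
    rw [hrj, Matrix.sub_apply, Matrix.one_apply_ne hj.ne', hN'j, sub_zero, mul_zero]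
  have hk'k : k' = k := by
    have h1 : k ≤ k' := S.min'_le k' (by simp [hS_def, hrk', inv_ne_zero hd0])
    have h2 : k' ≤ k := by
      by_contra h
      exact hk (hrlt k (not_le.mp h))
    exact le_antisymm h2 h1
  subst hk'k
  have hu'eq : u' = uGL := by
    apply Units.ext
    show u'.val = 1 + N
    ext i j
    by_cases hij : i = j
    · subst hij
      rw [hu'.1 i, Matrix.add_apply, Matrix.one_apply_eq]
      have hNii : N i i = 0 := by
        simp only [hN_def, Matrix.of_apply, ite_eq_right_iff]
        rintro ⟨rfl, h⟩; exact absurd h (lt_irrefl _)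
      rw [hNii, add_zero]
    · rw [Matrix.add_apply, Matrix.one_apply_ne hij, zero_add]
      have hval : u'.val i j = N' i j := by
        rw [hN'_def, Matrix.sub_apply, Matrix.one_apply_ne hij, sub_zero]
      by_cases hc : i = k ∧ k < j
      · obtain ⟨rfl, hkj⟩ := hc
        have hNval : N k j = -(r j * (r k)⁻¹) := by simp [hN_def, hkj]
        have hrjv : r j = d⁻¹ * (0 - N' k j) := by
          rw [hrj, Matrix.sub_apply, Matrix.one_apply_ne hkj.ne]
        rw [hval, hNval, hrjv, hrk', inv_inv]
        field_simp
        ring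
      · have h0 : N i j = 0 := by simp [hN_def, hc]
        rw [h0, hval]
        by_contra h
        exact hc (hN'supp i j h)
  have hw'eq : w'GL = wGL := Units.ext rfl
  have hp'eq : p' = pGL := by
    rw [hp_def, hxu, hu'eq, hw'eq]
    group
  simp only [Prod.mk.injEq]
  exact ⟨trivial, hu'eq, hp'eq⟩
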